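/- The duality identity −Σ_{m₁>m₂≥1} (−1)^{m₂}/(m₁² m₂) = Σ_{m₁>m₂≥1} (1/2)^{m₁−m₂}/(m₁ m₂²) holds, where both double series converge absolutely. -/

import Mathlib

open Finset

noncomputable def hh (n : ℕ) : ℝ := ∑ i ∈ range n, (1:ℝ)/((i:ℝ)+1)
noncomputable def h2 (n : ℕ) : ℝ := ∑ i ∈ range n, (1:ℝ)/((i:ℝ)+1)^2

lemma hh_succ (n : ℕ) : hh (n+1) = hh n + 1/((n:ℝ)+1) := by
  rw [hh, hh, Finset.sum_range_succ]

lemma h2_succ (n : ℕ) : h2 (n+1) = h2 n + 1/((n:ℝ)+1)^2 := by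
  rw [h2, h2, Finset.sum_range_succ]

lemma alt_partial (m r : ℕ) :
    ∑ j ∈ range (r+1), (-1:ℝ)^j * ((m+1).choose j : ℝ) = (-1)^r * (m.choose r : ℝ) := by
  induction r with
  | zero => simp
  | succ r ih =>
    rw [Finset.sum_range_succ, ih, Nat.choose_succ_succ]
    push_cast
    ring

lemma alt_succ_choose (m : ℕ) :
    ∑ b ∈ range (m+1), (-1:ℝ)^b * ((m+1).choose (b+1) : ℝ) = 1 := by
  have h := alt_partial m (m+1)
  rw [Finset.sum_range_succ'] at h
  simp only [Nat.choose_self, Nat.choose_succ_self, Nat.cast_zero, Nat.cast_one] at h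
  have : ∑ b ∈ range (m+1), (-1:ℝ)^(b+1) * ((m+1).choose (b+1) : ℝ)
      = - ∑ b ∈ range (m+1), (-1:ℝ)^b * ((m+1).choose (b+1) : ℝ) := by
    rw [← Finset.sum_neg_distrib]
    exact Finset.sum_congr rfl fun i _ => by ring
  rw [this] at h
  simp at h
  linarith

lemma choose_div_eq (s b : ℕ) :
    ((s.choose b : ℝ)) / ((b:ℝ)+1) = ((s+1).choose (b+1) : ℝ) / ((s:ℝ)+1) := by
  have h := Nat.add_one_mul_choose_eq s b
  have : ((s+1 : ℕ) : ℝ) * (s.choose b : ℝ) = ((s+1).choose (b+1) : ℝ) * ((b+1 : ℕ) : ℝ) := by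
    exact_mod_cast congrArg (Nat.cast : ℕ → ℝ) h
  push_cast at this
  field_simp
  linarith [this]

lemma idB (s : ℕ) :
    ∑ b ∈ range (s+1), (-1:ℝ)^b * (s.choose b : ℝ) / ((b:ℝ)+1) = 1/((s:ℝ)+1) := by
  have : ∀ b ∈ range (s+1), (-1:ℝ)^b * (s.choose b : ℝ) / ((b:ℝ)+1)
      = (-1:ℝ)^b * ((s+1).choose (b+1) : ℝ) / ((s:ℝ)+1) := by
    intro b _
    rw [mul_div_assoc, choose_div_eq, mul_div_assoc]
  rw [Finset.sum_congr rfl this]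
  rw [show ∀ f : ℕ → ℝ, ∑ b ∈ range (s+1), f b / ((s:ℝ)+1)
      = (∑ b ∈ range (s+1), f b) / ((s:ℝ)+1) from fun f => (Finset.sum_div _ _ _).symm]
  rw [alt_succ_choose]

lemma idA (m : ℕ) :
    ∑ i ∈ range m, (-1:ℝ)^i * (m.choose (i+1) : ℝ) / ((i:ℝ)+1) = hh m := by
  induction m with
  | zero => simp [hh]
  | succ m ih =>
    have split : ∀ i ∈ range (m+1), (-1:ℝ)^i * ((m+1).choose (i+1) : ℝ) / ((i:ℝ)+1)
        = (-1:ℝ)^i * (m.choose i : ℝ) / ((i:ℝ)+1)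
          + (-1:ℝ)^i * (m.choose (i+1) : ℝ) / ((i:ℝ)+1) := by
      intro i _
      rw [Nat.choose_succ_succ]
      push_cast
      ring
    rw [Finset.sum_congr rfl split, Finset.sum_add_distrib, idB m]
    have last : ∑ i ∈ range (m+1), (-1:ℝ)^i * (m.choose (i+1) : ℝ) / ((i:ℝ)+1)
        = ∑ i ∈ range m, (-1:ℝ)^i * (m.choose (i+1) : ℝ) / ((i:ℝ)+1) := by
      rw [Finset.sum_range_succ, Nat.choose_succ_self]
      simp
    rw [last, ih, hh_succ]
    ring

lemma idC (s : ℕ) :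
    ∑ b ∈ range (s+1), (-1:ℝ)^b * (s.choose b : ℝ) / ((b:ℝ)+1)^2 = hh (s+1) / ((s:ℝ)+1) := by
  have : ∀ b ∈ range (s+1), (-1:ℝ)^b * (s.choose b : ℝ) / ((b:ℝ)+1)^2
      = ((-1:ℝ)^b * ((s+1).choose (b+1) : ℝ) / ((b:ℝ)+1)) / ((s:ℝ)+1) := by
    intro b _
    have hb : ((b:ℝ)+1) ≠ 0 := by positivity
    calc (-1:ℝ)^b * (s.choose b : ℝ) / ((b:ℝ)+1)^2
        = ((-1:ℝ)^b / ((b:ℝ)+1)) * ((s.choose b : ℝ) / ((b:ℝ)+1)) := by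
          field_simp
          try ring
          try tauto
      _ = ((-1:ℝ)^b / ((b:ℝ)+1)) * (((s+1).choose (b+1) : ℝ) / ((s:ℝ)+1)) := by
          rw [choose_div_eq]
      _ = ((-1:ℝ)^b * ((s+1).choose (b+1) : ℝ) / ((b:ℝ)+1)) / ((s:ℝ)+1) := by ring
  rw [Finset.sum_congr rfl this, ← Finset.sum_div]
  have := idA (s+1)
  push_cast at this ⊢
  rw [this]

noncomputable def Gp (m : ℕ) : ℝ := ∑ j ∈ range (m+1), (-1:ℝ)^j * (m.choose j : ℝ) * h2 j
noncomputable def Ee (m : ℕ) : ℝ := ∑ j ∈ range (m+1), (-1:ℝ)^j * (m.choose j : ℝ) * h2 (j+1)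

lemma E_eq (m : ℕ) : Ee m = Gp m + hh (m+1)/((m:ℝ)+1) := by
  have split : ∀ j ∈ range (m+1), (-1:ℝ)^j * (m.choose j : ℝ) * h2 (j+1)
      = (-1:ℝ)^j * (m.choose j : ℝ) * h2 j + (-1:ℝ)^j * (m.choose j : ℝ) / ((j:ℝ)+1)^2 := by
    intro j _
    rw [h2_succ]
    ring
  rw [Ee, Finset.sum_congr rfl split, Finset.sum_add_distrib, idC m, ← Gp]

lemma Gp_succ (m : ℕ) : Gp (m+1) = Gp m - Ee m := by
  have peel : Gp (m+1) = ∑ i ∈ range (m+1), (-1:ℝ)^(i+1) * ((m+1).choose (i+1) : ℝ) * h2 (i+1) := by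
    rw [Gp, Finset.sum_range_succ']
    simp [h2]
  have pascal : ∀ i ∈ range (m+1), (-1:ℝ)^(i+1) * ((m+1).choose (i+1) : ℝ) * h2 (i+1)
      = -((-1:ℝ)^i * (m.choose i : ℝ) * h2 (i+1))
        + (-1:ℝ)^(i+1) * (m.choose (i+1) : ℝ) * h2 (i+1) := by
    intro i _
    rw [Nat.choose_succ_succ]
    push_cast
    ring
  have gm : ∑ i ∈ range (m+1), (-1:ℝ)^(i+1) * (m.choose (i+1) : ℝ) * h2 (i+1) = Gp m := by
    rw [Finset.sum_range_succ, Nat.choose_succ_self, Gp, Finset.sum_range_succ']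
    simp [h2]
  rw [peel, Finset.sum_congr rfl pascal, Finset.sum_add_distrib, Finset.sum_neg_distrib, ← Ee, gm]
  ring

lemma Gp_closed (m : ℕ) : Gp (m+1) = -(hh (m+1)/((m:ℝ)+1)) := by
  rw [Gp_succ, E_eq]; ring

noncomputable def Dp (m : ℕ) : ℝ := ∑ j ∈ range m, (-1:ℝ)^j * (m.choose (j+1) : ℝ) * h2 (j+1)

lemma Dp_eq : ∀ m : ℕ, Dp (m+1) = hh (m+1)/((m:ℝ)+1) := by
  intro m
  induction m with
  | zero => simp [Dp, hh, h2]
  | succ m ih =>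
    have pascal : ∀ j ∈ range (m+2), (-1:ℝ)^j * ((m+2).choose (j+1) : ℝ) * h2 (j+1)
        = (-1:ℝ)^j * ((m+1).choose j : ℝ) * h2 (j+1)
          + (-1:ℝ)^j * ((m+1).choose (j+1) : ℝ) * h2 (j+1) := by
      intro j _
      rw [show m+2 = (m+1)+1 from rfl, Nat.choose_succ_succ]
      push_cast
      ring
    have hd : Dp (m+2) = Ee (m+1) + Dp (m+1) := by
      rw [Dp, Finset.sum_congr rfl pascal, Finset.sum_add_distrib, ← Ee]
      congr 1
      rw [Dp, Finset.sum_range_succ, Nat.choose_succ_self]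
      simp
    rw [hd, ih, E_eq, Gp_closed]
    have h1 : ((m:ℝ)+1) ≠ 0 := by positivity
    push_cast
    ring

lemma idD (s : ℕ) :
    ∑ b ∈ range (s+1), (-1:ℝ)^b * (s.choose b : ℝ) * h2 (b+1) / ((b:ℝ)+1)
      = hh (s+1) / ((s:ℝ)+1)^2 := by
  have term : ∀ b ∈ range (s+1), (-1:ℝ)^b * (s.choose b : ℝ) * h2 (b+1) / ((b:ℝ)+1)
      = ((-1:ℝ)^b * ((s+1).choose (b+1) : ℝ) * h2 (b+1)) / ((s:ℝ)+1) := by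
    intro b _
    calc (-1:ℝ)^b * (s.choose b : ℝ) * h2 (b+1) / ((b:ℝ)+1)
        = ((-1:ℝ)^b * h2 (b+1)) * ((s.choose b : ℝ) / ((b:ℝ)+1)) := by ring
      _ = ((-1:ℝ)^b * h2 (b+1)) * (((s+1).choose (b+1) : ℝ) / ((s:ℝ)+1)) := by
          rw [choose_div_eq]
      _ = ((-1:ℝ)^b * ((s+1).choose (b+1) : ℝ) * h2 (b+1)) / ((s:ℝ)+1) := by ring
  rw [Finset.sum_congr rfl term, ← Finset.sum_div]
  have := Dp_eq s
  rw [Dp] at this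
  rw [this, div_div, ← sq]

lemma idMain (s : ℕ) (z : ℝ) :
    ∑ b ∈ range (s+1), (-1:ℝ)^b * (s.choose b : ℝ) * (z - h2 (b+1)) / ((b:ℝ)+1)
      = z/((s:ℝ)+1) - hh (s+1)/((s:ℝ)+1)^2 := by
  have term : ∀ b ∈ range (s+1), (-1:ℝ)^b * (s.choose b : ℝ) * (z - h2 (b+1)) / ((b:ℝ)+1)
      = z * ((-1:ℝ)^b * (s.choose b : ℝ) / ((b:ℝ)+1))
        - (-1:ℝ)^b * (s.choose b : ℝ) * h2 (b+1) / ((b:ℝ)+1) := by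
    intro b _
    ring
  rw [Finset.sum_congr rfl term, Finset.sum_sub_distrib, ← Finset.mul_sum, idB, idD]
  ring

open Filter Topology

lemma sq_summable (n : ℕ) : Summable (fun a : ℕ => (1:ℝ)/((a:ℝ)+(n:ℝ)+1)^2) := by
  have h : Summable (fun a : ℕ => (1:ℝ)/((a:ℝ))^2) :=
    Real.summable_one_div_nat_pow.mpr (by norm_num)
  have h' := (summable_nat_add_iff (f := fun a : ℕ => (1:ℝ)/((a:ℝ))^2) (n+1)).mpr h
  refine h'.congr fun a => ?_
  push_cast
  ring_nf

noncomputable def v (n : ℕ) : ℝ := ∑' a : ℕ, (1:ℝ)/((a:ℝ)+(n:ℝ)+1)^2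

lemma v_hasSum (n : ℕ) : HasSum (fun a : ℕ => (1:ℝ)/((a:ℝ)+(n:ℝ)+1)^2) (v n) :=
  (sq_summable n).hasSum

lemma v_nonneg (n : ℕ) : 0 ≤ v n := tsum_nonneg fun a => by positivity

lemma v_eq (n : ℕ) : v n = v 0 - h2 n := by
  have hs : Summable (fun a : ℕ => (1:ℝ)/((a:ℝ)+1)^2) := by
    have := sq_summable 0
    simpa using this
  have key := Summable.sum_add_tsum_nat_add (f := fun a : ℕ => (1:ℝ)/((a:ℝ)+1)^2) n hs
  have e1 : ∑' (i : ℕ), (1:ℝ)/(((i+n : ℕ):ℝ)+1)^2 = v n := by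
    refine tsum_congr fun a => ?_
    push_cast
    ring_nf
  have e2 : ∑' (i : ℕ), (1:ℝ)/((i:ℝ)+1)^2 = v 0 := by
    refine tsum_congr fun a => ?_
    norm_num
  have e3 : ∑ i ∈ range n, (1:ℝ)/((i:ℝ)+1)^2 = h2 n := rfl
  rw [e1, e2, e3] at key
  linarith

lemma tendsto_inv_shift (c : ℝ) (hc : 0 < c) :
    Tendsto (fun N : ℕ => (1:ℝ)/((N:ℝ)+c)) atTop (𝓝 0) := by
  have h1 : Tendsto (fun N : ℕ => ((N:ℝ)+c)) atTop atTop :=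
    tendsto_atTop_add_const_right _ c tendsto_natCast_atTop_atTop
  simpa [one_div, Pi.inv_def] using h1.inv_tendsto_atTop

lemma tel_hasSum (n : ℕ) :
    HasSum (fun a : ℕ => (1:ℝ)/((a:ℝ)+(n:ℝ)+1) - 1/((a:ℝ)+(n:ℝ)+2)) (1/((n:ℝ)+1)) := by
  have nonneg : ∀ a : ℕ, (0:ℝ) ≤ (1:ℝ)/((a:ℝ)+(n:ℝ)+1) - 1/((a:ℝ)+(n:ℝ)+2) := by
    intro a
    have h1 : (0:ℝ) < (a:ℝ)+(n:ℝ)+1 := by positivity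
    have h2 : ((a:ℝ)+(n:ℝ)+1) ≤ ((a:ℝ)+(n:ℝ)+2) := by linarith
    have := one_div_le_one_div_of_le h1 h2
    linarith
  rw [hasSum_iff_tendsto_nat_of_nonneg nonneg]
  have partial_eq : ∀ N : ℕ, ∑ a ∈ range N, ((1:ℝ)/((a:ℝ)+(n:ℝ)+1) - 1/((a:ℝ)+(n:ℝ)+2))
      = 1/((n:ℝ)+1) - 1/((N:ℝ)+(n:ℝ)+1) := by
    intro N
    have h := Finset.sum_range_sub' (f := fun a : ℕ => (1:ℝ)/((a:ℝ)+(n:ℝ)+1)) N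
    have e : ∑ i ∈ range N, ((1:ℝ)/((i:ℝ)+(n:ℝ)+1) - 1/(((i+1:ℕ):ℝ)+(n:ℝ)+1))
        = ∑ a ∈ range N, ((1:ℝ)/((a:ℝ)+(n:ℝ)+1) - 1/((a:ℝ)+(n:ℝ)+2)) := by
      refine Finset.sum_congr rfl fun a _ => ?_
      push_cast
      ring_nf
    rw [e] at h
    rw [h]
    norm_num
  simp only [partial_eq]
  have := (tendsto_inv_shift ((n:ℝ)+1) (by positivity)).const_sub (1/((n:ℝ)+1))
  simpa using this.congr (fun N => by ring)

lemma v_le (n : ℕ) : v (n+1) ≤ 1/((n:ℝ)+1) := by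
  have hv : HasSum (fun a : ℕ => (1:ℝ)/((a:ℝ)+(n:ℝ)+2)^2) (v (n+1)) := by
    have h := v_hasSum (n+1)
    convert h using 2 with a
    push_cast
    ring
  refine hasSum_le (fun a => ?_) hv (tel_hasSum n)
  have h1 : (0:ℝ) < (a:ℝ)+(n:ℝ)+1 := by positivity
  have h2 : (0:ℝ) < (a:ℝ)+(n:ℝ)+2 := by positivity
  have key : (1:ℝ)/(((a:ℝ)+(n:ℝ)+2)^2) ≤ 1/((((a:ℝ)+(n:ℝ)+1))*(((a:ℝ)+(n:ℝ)+2))) :=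
    one_div_le_one_div_of_le (by positivity) (by nlinarith)
  have expand : (1:ℝ)/((((a:ℝ)+(n:ℝ)+1))*(((a:ℝ)+(n:ℝ)+2)))
      = 1/((a:ℝ)+(n:ℝ)+1) - 1/((a:ℝ)+(n:ℝ)+2) := by
    field_simp
    ring
  linarith

lemma harm_hasSum (K : ℕ) :
    HasSum (fun a : ℕ => (1:ℝ)/((a:ℝ)+1) - 1/((a:ℝ)+(K:ℝ)+1)) (hh K) := by
  have nonneg : ∀ a : ℕ, (0:ℝ) ≤ (1:ℝ)/((a:ℝ)+1) - 1/((a:ℝ)+(K:ℝ)+1) := by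
    intro a
    have h1 : (0:ℝ) < (a:ℝ)+1 := by positivity
    have h2 : ((a:ℝ)+1) ≤ ((a:ℝ)+(K:ℝ)+1) := by
      have : (0:ℝ) ≤ (K:ℝ) := by positivity
      linarith
    have := one_div_le_one_div_of_le h1 h2
    linarith
  rw [hasSum_iff_tendsto_nat_of_nonneg nonneg]
  have shift_eq : ∀ N : ℕ, ∑ a ∈ range N, (1:ℝ)/((a:ℝ)+(K:ℝ)+1) = hh (K+N) - hh K := by
    intro N
    have hsplit : hh (K+N) = hh K + ∑ a ∈ range N, (1:ℝ)/(((K+a:ℕ):ℝ)+1) := by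
      rw [hh, Finset.sum_range_add]
      rfl
    have : ∑ a ∈ range N, (1:ℝ)/((a:ℝ)+(K:ℝ)+1) = ∑ a ∈ range N, (1:ℝ)/(((K+a:ℕ):ℝ)+1) := by
      refine Finset.sum_congr rfl fun a _ => ?_
      push_cast
      ring_nf
    rw [this]
    linarith [hsplit]
  have partial_eq : ∀ N : ℕ, ∑ a ∈ range N, ((1:ℝ)/((a:ℝ)+1) - 1/((a:ℝ)+(K:ℝ)+1))
      = hh K - (hh (K+N) - hh N) := by
    intro N
    rw [Finset.sum_sub_distrib, shift_eq]
    have : ∑ a ∈ range N, (1:ℝ)/((a:ℝ)+1) = hh N := rfl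
    rw [this]
    ring
  simp only [partial_eq]
  have diff_tendsto : Tendsto (fun N : ℕ => hh (K+N) - hh N) atTop (𝓝 0) := by
    have diff_eq : ∀ N : ℕ, hh (K+N) - hh N = ∑ i ∈ range K, (1:ℝ)/(((N+i:ℕ):ℝ)+1) := by
      intro N
      rw [Nat.add_comm K N, hh, Finset.sum_range_add]
      have e : ∑ i ∈ range N, (1:ℝ)/((i:ℝ)+1) = hh N := rfl
      rw [e]
      ring
    have bnd : ∀ N : ℕ, ∑ i ∈ range K, (1:ℝ)/(((N+i:ℕ):ℝ)+1) ≤ (K:ℝ) * (1/((N:ℝ)+1)) := by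
      intro N
      have hb : ∀ i ∈ range K, (1:ℝ)/(((N+i:ℕ):ℝ)+1) ≤ 1/((N:ℝ)+1) := by
        intro i _
        apply one_div_le_one_div_of_le (by positivity)
        push_cast
        linarith [Nat.cast_nonneg (α := ℝ) i]
      calc ∑ i ∈ range K, (1:ℝ)/(((N+i:ℕ):ℝ)+1) ≤ ∑ _i ∈ range K, (1:ℝ)/((N:ℝ)+1) :=
            Finset.sum_le_sum hb
        _ = (K:ℝ) * (1/((N:ℝ)+1)) := by
            rw [Finset.sum_const, Finset.card_range, nsmul_eq_mul]
    have nn : ∀ N : ℕ, (0:ℝ) ≤ ∑ i ∈ range K, (1:ℝ)/(((N+i:ℕ):ℝ)+1) := by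
      intro N
      exact Finset.sum_nonneg fun i _ => by positivity
    have lim : Tendsto (fun N : ℕ => (K:ℝ) * (1/((N:ℝ)+1))) atTop (𝓝 0) := by
      have := (tendsto_inv_shift 1 one_pos).const_mul (K:ℝ)
      simpa using this
    have sq := squeeze_zero nn bnd lim
    refine sq.congr fun N => ?_
    rw [diff_eq]
  have final : Tendsto (fun N : ℕ => hh K - (hh (K+N) - hh N)) atTop (𝓝 (hh K - 0)) :=
    tendsto_const_nhds.sub diff_tendsto
  simpa using final

lemma choose_hasSum (b : ℕ) :
    HasSum (fun c : ℕ => (((b+c).choose b : ℕ):ℝ) * (1/2:ℝ)^(b+c+1)) 1 := by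
  have hr : ‖(1/2:ℝ)‖ < 1 := by
    rw [Real.norm_eq_abs]
    rw [abs_of_pos (by norm_num : (0:ℝ) < 1/2)]
    norm_num
  have h := hasSum_choose_mul_geometric_of_norm_lt_one (𝕜 := ℝ) b hr
  have h2 := h.mul_right ((1/2:ℝ)^(b+1))
  have hne : ((1/2:ℝ))^(b+1) ≠ 0 := by positivity
  have hval : (1/(1-(1/2:ℝ))^(b+1)) * (1/2:ℝ)^(b+1) = 1 := by
    rw [show (1:ℝ)-1/2 = 1/2 by norm_num]
    exact one_div_mul_cancel hne
  rw [hval] at h2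
  have hfun : (fun c : ℕ => (((b+c).choose b : ℕ):ℝ) * (1/2:ℝ)^(b+c+1))
      = (fun c : ℕ => (((c+b).choose b : ℕ):ℝ) * (1/2:ℝ)^c * (1/2:ℝ)^(b+1)) := by
    funext c
    rw [Nat.add_comm b c, show c+b+1 = c+(b+1) from by omega, pow_add]
    ring
  rw [hfun]
  exact h2

-- ===================== chunk 3 =====================

abbrev Idx := {p : ℕ × ℕ // p.2 < p.1 ∧ 0 < p.2}

def e1 : ℕ × ℕ ≃ Idx where
  toFun q := ⟨((q.1 + 1) + (q.2 + 1), q.1 + 1), by constructor <;> omega⟩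
  invFun p := (p.1.2 - 1, p.1.1 - p.1.2 - 1)
  left_inv q := by
    obtain ⟨b, a⟩ := q
    show ((b+1) - 1, ((b+1)+(a+1)) - (b+1) - 1) = (b, a)
    simp only [Prod.mk.injEq]
    constructor <;> omega
  right_inv p := by
    obtain ⟨⟨m, n⟩, h1, h2⟩ := p
    apply Subtype.ext
    show (((n-1)+1) + ((m - n - 1)+1), (n-1)+1) = (m, n)
    simp only [Prod.mk.injEq]
    simp only [] at h1 h2
    constructor <;> omega

def e2 : ℕ × ℕ ≃ Idx := (Equiv.prodComm ℕ ℕ).trans e1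

noncomputable def fL : Idx → ℝ := fun p => (-1:ℝ)^(p.1.2) / ((p.1.1:ℝ)^2 * (p.1.2:ℝ))
noncomputable def fR : Idx → ℝ := fun p => (1/2:ℝ)^(p.1.1 - p.1.2) / ((p.1.1:ℝ) * (p.1.2:ℝ)^2)

noncomputable def Ff : ℕ × ℕ → ℝ :=
  fun q => (-1:ℝ)^(q.1+1) / (((q.1:ℝ)+(q.2:ℝ)+2)^2 * ((q.1:ℝ)+1))
noncomputable def Gg : ℕ × ℕ → ℝ :=
  fun q => (1/2:ℝ)^(q.1+1) / (((q.1:ℝ)+(q.2:ℝ)+2) * ((q.2:ℝ)+1)^2)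

lemma comp1 (q : ℕ × ℕ) : fL (e1 q) = Ff q := by
  obtain ⟨b, a⟩ := q
  show (-1:ℝ)^(b+1) / ((((b+1)+(a+1) : ℕ):ℝ)^2 * (((b+1):ℕ):ℝ))
      = (-1:ℝ)^(b+1) / (((b:ℝ)+(a:ℝ)+2)^2 * ((b:ℝ)+1))
  push_cast
  ring_nf

lemma comp2 (q : ℕ × ℕ) : fR (e2 q) = Gg q := by
  obtain ⟨a, b⟩ := q
  show (1/2:ℝ)^(((b+1)+(a+1)) - (b+1)) / ((((b+1)+(a+1) : ℕ):ℝ) * (((b+1):ℕ):ℝ)^2)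
      = (1/2:ℝ)^(a+1) / (((a:ℝ)+(b:ℝ)+2) * ((b:ℝ)+1)^2)
  rw [show ((b+1)+(a+1)) - (b+1) = a+1 from by omega]
  push_cast
  ring_nf

lemma absF (q : ℕ × ℕ) : |Ff q| = 1 / (((q.1:ℝ)+(q.2:ℝ)+2)^2 * ((q.1:ℝ)+1)) := by
  rw [Ff, abs_div, abs_pow, abs_neg, abs_one, one_pow,
    abs_of_pos (show (0:ℝ) < ((q.1:ℝ)+(q.2:ℝ)+2)^2 * ((q.1:ℝ)+1) by positivity)]

lemma absG (q : ℕ × ℕ) : |Gg q| = Gg q := abs_of_nonneg (by rw [Gg]; positivity)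

lemma base_sq : Summable (fun b : ℕ => (1:ℝ)/((b:ℝ)+1)^2) := by
  have := sq_summable 0
  simpa using this

lemma rowLabs (b : ℕ) :
    HasSum (fun a : ℕ => 1 / (((b:ℝ)+(a:ℝ)+2)^2 * ((b:ℝ)+1))) (v (b+1) / ((b:ℝ)+1)) := by
  have h := (v_hasSum (b+1)).mul_left (1/((b:ℝ)+1))
  have e : (fun a : ℕ => (1/((b:ℝ)+1)) * ((1:ℝ)/((a:ℝ)+(((b+1):ℕ):ℝ)+1)^2))
      = fun a : ℕ => 1 / (((b:ℝ)+(a:ℝ)+2)^2 * ((b:ℝ)+1)) := by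
    funext a
    push_cast
    have h1 : ((a:ℝ)+((b:ℝ)+1)+1) = (b:ℝ)+(a:ℝ)+2 := by ring
    rw [h1]
    have hb : ((b:ℝ)+1) ≠ 0 := by positivity
    have ha : ((b:ℝ)+(a:ℝ)+2) ≠ 0 := by positivity
    field_simp
  rw [e] at h
  convert h using 1
  rfl
  ring

lemma rowL (b : ℕ) :
    HasSum (fun a : ℕ => Ff (b, a)) ((-1:ℝ)^(b+1) * v (b+1) / ((b:ℝ)+1)) := by
  have h := (rowLabs b).mul_left ((-1:ℝ)^(b+1))
  have e : (fun a : ℕ => ((-1:ℝ)^(b+1)) * (1 / (((b:ℝ)+(a:ℝ)+2)^2 * ((b:ℝ)+1))))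
      = fun a : ℕ => Ff (b, a) := by
    funext a
    rw [Ff]
    ring
  rw [e] at h
  convert h using 1
  rfl
  ring

lemma sumAbsF : Summable (fun q : ℕ × ℕ => |Ff q|) := by
  rw [show (fun q : ℕ × ℕ => |Ff q|)
      = fun q => 1 / (((q.1:ℝ)+(q.2:ℝ)+2)^2 * ((q.1:ℝ)+1)) from funext absF]
  refine (summable_prod_of_nonneg fun q => by positivity).mpr ⟨fun b => (rowLabs b).summable, ?_⟩
  have e : (fun b : ℕ => ∑' a : ℕ, 1 / (((b:ℝ)+(a:ℝ)+2)^2 * ((b:ℝ)+1)))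
      = fun b : ℕ => v (b+1) / ((b:ℝ)+1) := funext fun b => (rowLabs b).tsum_eq
  rw [e]
  refine Summable.of_nonneg_of_le
    (fun b => div_nonneg (v_nonneg _) (by positivity)) (fun b => ?_) base_sq
  calc v (b+1) / ((b:ℝ)+1) ≤ (1/((b:ℝ)+1)) / ((b:ℝ)+1) := by
        gcongr
        exact v_le b
    _ = 1/((b:ℝ)+1)^2 := by
        rw [div_div, ← sq]

lemma sumF : Summable Ff := Summable.of_abs sumAbsF

noncomputable def Phi : ℕ × ℕ → ℝ :=
  fun q => (((q.1+q.2).choose q.1 : ℕ):ℝ) * (1/2:ℝ)^(q.1+q.2+1)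
    * ((-1:ℝ)^q.1 * v (q.1+1) / ((q.1:ℝ)+1))

lemma rowPhi (b : ℕ) :
    HasSum (fun c : ℕ => Phi (b, c)) ((-1:ℝ)^b * v (b+1) / ((b:ℝ)+1)) := by
  have h := (choose_hasSum b).mul_right ((-1:ℝ)^b * v (b+1) / ((b:ℝ)+1))
  rw [one_mul] at h
  exact h

lemma absPhi (q : ℕ × ℕ) :
    |Phi q| = (((q.1+q.2).choose q.1 : ℕ):ℝ) * (1/2:ℝ)^(q.1+q.2+1)
      * (v (q.1+1) / ((q.1:ℝ)+1)) := by
  simp only [Phi, abs_mul, abs_div, abs_pow, abs_neg, abs_one, one_pow, one_mul, Nat.abs_cast]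
  rw [abs_of_nonneg (v_nonneg (q.1+1)),
    abs_of_nonneg (show (0:ℝ) ≤ (q.1:ℝ)+1 by positivity),
    abs_of_nonneg (show (0:ℝ) ≤ (2:ℝ) by norm_num)]

lemma rowPhiAbs (b : ℕ) :
    HasSum (fun c : ℕ => |Phi (b, c)|) (v (b+1) / ((b:ℝ)+1)) := by
  have h := (choose_hasSum b).mul_right (v (b+1) / ((b:ℝ)+1))
  rw [one_mul] at h
  have e : (fun c : ℕ => (((b+c).choose b : ℕ):ℝ) * (1/2:ℝ)^(b+c+1) * (v (b+1) / ((b:ℝ)+1)))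
      = fun c : ℕ => |Phi (b, c)| := by
    funext c
    rw [absPhi]
  rw [e] at h
  exact h

lemma sumAbsPhi : Summable (fun q : ℕ × ℕ => |Phi q|) := by
  refine (summable_prod_of_nonneg fun q => abs_nonneg _).mpr
    ⟨fun b => (rowPhiAbs b).summable, ?_⟩
  have e : (fun b : ℕ => ∑' c : ℕ, |Phi (b, c)|) = fun b : ℕ => v (b+1) / ((b:ℝ)+1) :=
    funext fun b => (rowPhiAbs b).tsum_eq
  rw [e]
  refine Summable.of_nonneg_of_le
    (fun b => div_nonneg (v_nonneg _) (by positivity)) (fun b => ?_) base_sq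
  calc v (b+1) / ((b:ℝ)+1) ≤ (1/((b:ℝ)+1)) / ((b:ℝ)+1) := by
        gcongr
        exact v_le b
    _ = 1/((b:ℝ)+1)^2 := by rw [div_div, ← sq]

lemma sumPhi : Summable Phi := Summable.of_abs sumAbsPhi

lemma rowT (a : ℕ) :
    HasSum (fun b : ℕ => (1:ℝ)/(((a:ℝ)+(b:ℝ)+2) * ((b:ℝ)+1)^2))
      (v 0/((a:ℝ)+1) - hh (a+1)/((a:ℝ)+1)^2) := by
  have h0 : HasSum (fun b : ℕ => (1:ℝ)/((b:ℝ)+1)^2) (v 0) := by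
    have := v_hasSum 0
    convert this using 2 with b
    push_cast
    ring
  have hH := harm_hasSum (a+1)
  have comb := (h0.mul_left (1/((a:ℝ)+1))).sub (hH.mul_left (1/((a:ℝ)+1)^2))
  have e : (fun b : ℕ => (1/((a:ℝ)+1)) * ((1:ℝ)/((b:ℝ)+1)^2)
        - (1/((a:ℝ)+1)^2) * ((1:ℝ)/((b:ℝ)+1) - 1/((b:ℝ)+(((a+1):ℕ):ℝ)+1)))
      = fun b : ℕ => (1:ℝ)/(((a:ℝ)+(b:ℝ)+2) * ((b:ℝ)+1)^2) := by
    funext b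
    push_cast
    have hA : ((a:ℝ)+1) ≠ 0 := by positivity
    have hB : ((b:ℝ)+1) ≠ 0 := by positivity
    have hAB : ((a:ℝ)+(b:ℝ)+2) ≠ 0 := by positivity
    have hBA : ((b:ℝ)+((a:ℝ)+1)+1) = (a:ℝ)+(b:ℝ)+2 := by ring
    rw [hBA]
    field_simp
    ring
  rw [e] at comb
  convert comb using 1
  rfl
  ring

lemma rowR (a : ℕ) :
    HasSum (fun b : ℕ => Gg (a, b))
      ((1/2:ℝ)^(a+1) * (v 0/((a:ℝ)+1) - hh (a+1)/((a:ℝ)+1)^2)) := by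
  have h := (rowT a).mul_left ((1/2:ℝ)^(a+1))
  have e : (fun b : ℕ => ((1/2:ℝ)^(a+1)) * ((1:ℝ)/(((a:ℝ)+(b:ℝ)+2) * ((b:ℝ)+1)^2)))
      = fun b : ℕ => Gg (a, b) := by
    funext b
    rw [Gg]
    ring
  rw [e] at h
  exact h

lemma Tval_nonneg (a : ℕ) : 0 ≤ v 0/((a:ℝ)+1) - hh (a+1)/((a:ℝ)+1)^2 :=
  hasSum_le (fun b => by positivity) hasSum_zero (rowT a)

lemma Tval_le (a : ℕ) : v 0/((a:ℝ)+1) - hh (a+1)/((a:ℝ)+1)^2 ≤ v 0 := by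
  have h0 : HasSum (fun b : ℕ => (1:ℝ)/((b:ℝ)+1)^2) (v 0) := by
    have := v_hasSum 0
    convert this using 2 with b
    push_cast
    ring
  refine hasSum_le (fun b => ?_) (rowT a) h0
  have h1 : (0:ℝ) < ((b:ℝ)+1)^2 := by positivity
  have h2 : (1:ℝ) ≤ (a:ℝ)+(b:ℝ)+2 := by
    have : (0:ℝ) ≤ (a:ℝ) := by positivity
    have : (0:ℝ) ≤ (b:ℝ) := by positivity
    linarith
  rw [div_le_div_iff₀ (by positivity) h1]
  nlinarith

lemma sumAbsG : Summable (fun q : ℕ × ℕ => |Gg q|) := by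
  rw [show (fun q : ℕ × ℕ => |Gg q|) = Gg from funext absG]
  refine (summable_prod_of_nonneg fun q => by rw [Gg]; positivity).mpr
    ⟨fun a => (rowR a).summable, ?_⟩
  have e : (fun a : ℕ => ∑' b : ℕ, Gg (a, b))
      = fun a : ℕ => (1/2:ℝ)^(a+1) * (v 0/((a:ℝ)+1) - hh (a+1)/((a:ℝ)+1)^2) :=
    funext fun a => (rowR a).tsum_eq
  rw [e]
  have maj : Summable (fun a : ℕ => (1/2:ℝ)^(a+1) * v 0) := by
    have hg : Summable (fun a : ℕ => (1/2:ℝ)^a) :=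
      summable_geometric_of_lt_one (by norm_num) (by norm_num)
    have := (hg.mul_right ((1/2:ℝ) * v 0)).congr (f := fun a => (1/2:ℝ)^a * ((1/2:ℝ) * v 0))
      (g := fun a : ℕ => (1/2:ℝ)^(a+1) * v 0) ?_
    · exact this
    · intro a
      show (1/2:ℝ)^a * ((1/2:ℝ) * v 0) = (1/2:ℝ)^(a+1) * v 0
      rw [pow_succ]
      ring
  refine Summable.of_nonneg_of_le
    (fun a => mul_nonneg (by positivity) (Tval_nonneg a)) (fun a => ?_) maj
  have := Tval_le a
  have h1 : (0:ℝ) ≤ (1/2:ℝ)^(a+1) := by positivity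
  nlinarith [Tval_nonneg a]

lemma sumG : Summable Gg := Summable.of_abs sumAbsG

lemma per_s (s : ℕ) : ∑ p ∈ Finset.HasAntidiagonal.antidiagonal s, Phi p
    = (1/2:ℝ)^(s+1) * (v 0/((s:ℝ)+1) - hh (s+1)/((s:ℝ)+1)^2) := by
  rw [Finset.Nat.sum_antidiagonal_eq_sum_range_succ_mk]
  have term : ∀ k ∈ range (s+1), Phi (k, s-k)
      = (1/2:ℝ)^(s+1) * ((-1:ℝ)^k * (s.choose k : ℝ) * (v 0 - h2 (k+1)) / ((k:ℝ)+1)) := by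
    intro k hk
    rw [Finset.mem_range] at hk
    rw [Phi]
    simp only []
    rw [show k + (s-k) = s from by omega, v_eq (k+1)]
    ring
  rw [Finset.sum_congr rfl term, ← Finset.mul_sum, idMain s (v 0)]

lemma tsumPhi_eq : ∑' q : ℕ × ℕ, Phi q
    = ∑' s : ℕ, (1/2:ℝ)^(s+1) * (v 0/((s:ℝ)+1) - hh (s+1)/((s:ℝ)+1)^2) := by
  have hE := (Finset.HasAntidiagonal.sigmaAntidiagonalEquivProd).tsum_eq Phi
  have hsum : Summable (fun x : (Σ n : ℕ, ↥(Finset.HasAntidiagonal.antidiagonal n)) =>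
      Phi (Finset.HasAntidiagonal.sigmaAntidiagonalEquivProd x)) :=
    (Finset.HasAntidiagonal.sigmaAntidiagonalEquivProd).summable_iff.mpr sumPhi
  rw [← hE, Summable.tsum_sigma' (fun n => Summable.of_finite) hsum]
  refine tsum_congr fun n => ?_
  have : ∑' (c : ↥(Finset.HasAntidiagonal.antidiagonal n)),
      Phi (Finset.HasAntidiagonal.sigmaAntidiagonalEquivProd ⟨n, c⟩)
      = ∑' (c : ↥(Finset.HasAntidiagonal.antidiagonal n)), Phi (↑c) := rfl
  rw [this, Finset.tsum_subtype, per_s]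

/-- The weight-3 duality identity
`−Σ_{m₁>m₂≥1} (−1)^{m₂}/(m₁² m₂) = Σ_{m₁>m₂≥1} (1/2)^{m₁−m₂}/(m₁ m₂²)`,
both double series converging absolutely. -/
theorem weight_three_duality :
    (Summable fun p : {p : ℕ × ℕ // p.2 < p.1 ∧ 0 < p.2} =>
        |((-1 : ℝ)) ^ (p.1.2) / ((p.1.1 : ℝ) ^ 2 * (p.1.2 : ℝ))|) ∧
      (Summable fun p : {p : ℕ × ℕ // p.2 < p.1 ∧ 0 < p.2} =>
        |(1 / 2 : ℝ) ^ (p.1.1 - p.1.2) / ((p.1.1 : ℝ) * (p.1.2 : ℝ) ^ 2)|) ∧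
      (-(∑' p : {p : ℕ × ℕ // p.2 < p.1 ∧ 0 < p.2},
            ((-1 : ℝ)) ^ (p.1.2) / ((p.1.1 : ℝ) ^ 2 * (p.1.2 : ℝ))) =
          ∑' p : {p : ℕ × ℕ // p.2 < p.1 ∧ 0 < p.2},
            (1 / 2 : ℝ) ^ (p.1.1 - p.1.2) / ((p.1.1 : ℝ) * (p.1.2 : ℝ) ^ 2)) := by
  refine ⟨?_, ?_, ?_⟩
  · show Summable fun p : Idx => |fL p|
    refine (e1.summable_iff (f := fun p : Idx => |fL p|)).mp ?_
    have : ((fun p : Idx => |fL p|) ∘ e1) = fun q => |Ff q| := by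
      funext q
      simp only [Function.comp]
      rw [comp1]
    rw [this]
    exact sumAbsF
  · show Summable fun p : Idx => |fR p|
    refine (e2.summable_iff (f := fun p : Idx => |fR p|)).mp ?_
    have : ((fun p : Idx => |fR p|) ∘ e2) = fun q => |Gg q| := by
      funext q
      simp only [Function.comp]
      rw [comp2]
    rw [this]
    exact sumAbsG
  · show -(∑' p : Idx, fL p) = ∑' p : Idx, fR p
    have hL : ∑' p : Idx, fL p = ∑' q : ℕ × ℕ, Ff q := by
      rw [← e1.tsum_eq fL]
      exact tsum_congr comp1
    have hR : ∑' p : Idx, fR p = ∑' q : ℕ × ℕ, Gg q := by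
      rw [← e2.tsum_eq fR]
      exact tsum_congr comp2
    have stepL1 : ∑' q : ℕ × ℕ, Ff q = ∑' b : ℕ, ((-1:ℝ)^(b+1) * v (b+1) / ((b:ℝ)+1)) := by
      rw [Summable.tsum_prod' sumF (fun b => (rowL b).summable)]
      exact tsum_congr fun b => (rowL b).tsum_eq
    have stepL2 : -∑' b : ℕ, ((-1:ℝ)^(b+1) * v (b+1) / ((b:ℝ)+1))
        = ∑' b : ℕ, ((-1:ℝ)^b * v (b+1) / ((b:ℝ)+1)) := by
      rw [← tsum_neg]
      exact tsum_congr fun b => by rw [pow_succ]; ring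
    have stepL3 : ∑' b : ℕ, ((-1:ℝ)^b * v (b+1) / ((b:ℝ)+1)) = ∑' q : ℕ × ℕ, Phi q := by
      rw [Summable.tsum_prod' sumPhi (fun b => (rowPhi b).summable)]
      exact (tsum_congr fun b => (rowPhi b).tsum_eq).symm
    have stepR : ∑' q : ℕ × ℕ, Gg q
        = ∑' a : ℕ, (1/2:ℝ)^(a+1) * (v 0/((a:ℝ)+1) - hh (a+1)/((a:ℝ)+1)^2) := by
      rw [Summable.tsum_prod' sumG (fun a => (rowR a).summable)]
      exact tsum_congr fun a => (rowR a).tsum_eq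
    rw [hL, hR, stepL1, stepL2, stepL3, tsumPhi_eq, stepR]
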